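/- arXiv:1406.5557 — 2 statements merged into one kernel-verified Lean document; each statement's English description precedes it below -/
import Mathlib

section
/- For every n ≥ 1 and every k with 0 ≤ k ≤ 2^{n-1}−1, one has σ̂_n(2k) + σ̂_n(2k+1) = 2^n − 1, and σ̂_n(2k) is even. -/
/-- The Sierpinski gasket pattern: `g n m` is `g_m^{(n)} ∈ {0,1}` for `1 ≤ m ≤ n`,
defined by `g_1^{(n)} = g_n^{(n)} = 1` and
`g_m^{(n)} = g_{m-1}^{(n-1)} + g_m^{(n-1)} mod 2` for `2 ≤ m ≤ n−1`. -/
def g : ℕ → ℕ → ℕ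
  | 0, _ => 0
  | n + 1, m =>
    if m = 1 ∨ m = n + 1 then 1
    else if 2 ≤ m ∧ m ≤ n then (g n (m - 1) + g n m) % 2
    else 0

/-- The doubling operators `T_0` and `T_1` on binary tuples. -/
def Tmap (α : ℕ) (s : List ℕ) : List ℕ :=
  if α = 0 then s ++ s else s ++ s.map (fun x => 1 - x)

/-- The binary tuple `ν⁽ⁿ⁾ = (T_{g_1^{(n)}} ∘ T_{g_2^{(n)}} ∘ ⋯ ∘ T_{g_{n-1}^{(n)}})(0)`,
of length `2^{n-1}`. -/
def nuList (n : ℕ) : List ℕ :=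
  (List.range (n - 1)).foldr (fun i acc => Tmap (g n (i + 1)) acc) [0]

/-- The entry `ν_m^{(n)}`. -/
def nu (n m : ℕ) : ℕ := (nuList n).getD m 0

/-- The map `σ̂_n` on `I_n = {0, …, 2ⁿ−1}`: `σ̂_1 = id` and
`σ̂_n(j) = σ̂_{n-1}(j mod 2^{n-1}) + 2^{n-1}·c_j` where `c_{2m} = 1 − ν_m^{(n)}` and
`c_{2m+1} = ν_m^{(n)}`. -/
def sigmaHat : ℕ → ℕ → ℕ
  | 0, j => j
  | 1, j => j
  | n + 2, j =>
    sigmaHat (n + 1) (j % 2 ^ (n + 1)) +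
      2 ^ (n + 1) * (if j % 2 = 0 then 1 - nu (n + 2) (j / 2) else nu (n + 2) (j / 2))
lemma Tmap_le_one {α : ℕ} {l : List ℕ} (h : ∀ x ∈ l, x ≤ 1) :
    ∀ x ∈ Tmap α l, x ≤ 1 := by
  intro x hx
  unfold Tmap at hx
  split at hx <;> rw [List.mem_append] at hx
  · rcases hx with h' | h' <;> exact h x h'
  · rcases hx with h' | h'
    · exact h x h'
    · rcases List.mem_map.1 h' with ⟨y, hy, rfl⟩
      omega

lemma nuList_le_one (n : ℕ) : ∀ x ∈ nuList n, x ≤ 1 := by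
  unfold nuList
  generalize List.range (n - 1) = L
  induction L with
  | nil => simp
  | cons a L ih => exact Tmap_le_one ih

lemma nu_le_one (n m : ℕ) : nu n m ≤ 1 := by
  unfold nu
  rw [List.getD_eq_getElem?_getD]
  rcases h : (nuList n)[m]? with _ | x
  · simp
  · obtain ⟨hm, he⟩ := List.getElem?_eq_some_iff.1 h
    simpa [he.symm] using nuList_le_one n _ (List.getElem_mem hm)

lemma aux : ∀ n k, k ≤ 2 ^ n - 1 →
    sigmaHat (n+1) (2 * k) + sigmaHat (n+1) (2 * k + 1) = 2 ^ (n+1) - 1 ∧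
      2 ∣ sigmaHat (n+1) (2 * k) := by
  intro n
  induction n with
  | zero =>
    intro k hk
    interval_cases k
    simp [sigmaHat]
  | succ n ih =>
    intro k hk
    have h2 : (0:ℕ) < 2 ^ n := Nat.pow_pos (by norm_num)
    set r := k % 2 ^ n with hr
    have hrk : r ≤ 2 ^ n - 1 := by
      have := Nat.mod_lt k h2; omega
    obtain ⟨hsum, heven⟩ := ih r hrk
    have hq := Nat.div_add_mod k (2 ^ n)
    have hps : (2:ℕ) ^ (n + 1) = 2 * 2 ^ n := by ring
    have hpp : (2:ℕ) ^ (n + 1) * (k / 2 ^ n) = 2 * (2 ^ n * (k / 2 ^ n)) := by ring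
    have hm1 : (2 * k) % 2 ^ (n + 1) = 2 * r := by
      rw [pow_succ, mul_comm (2^n) 2, Nat.mul_mod_mul_left]
    have hm2 : (2 * k + 1) % 2 ^ (n + 1) = 2 * r + 1 := by
      have h1 : 2 * k + 1 = 2 ^ (n+1) * (k / 2 ^ n) + (2 * r + 1) := by omega
      rw [h1, Nat.mul_add_mod, Nat.mod_eq_of_lt (by omega)]
    have he1 : sigmaHat (n + 2) (2 * k) =
        sigmaHat (n + 1) (2 * r) + 2 ^ (n + 1) * (1 - nu (n + 2) k) := by
      show sigmaHat (n + 1) ((2 * k) % 2 ^ (n + 1)) + _ = _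
      rw [hm1, Nat.mul_mod_right, Nat.mul_div_cancel_left _ (by norm_num : 0 < 2)]
      simp
    have he2 : sigmaHat (n + 2) (2 * k + 1) =
        sigmaHat (n + 1) (2 * r + 1) + 2 ^ (n + 1) * nu (n + 2) k := by
      show sigmaHat (n + 1) ((2 * k + 1) % 2 ^ (n + 1)) + _ = _
      rw [hm2, Nat.mul_add_mod, Nat.mul_add_div (by norm_num : 0 < 2)]
      simp
    have hnu : nu (n + 2) k = 0 ∨ nu (n + 2) k = 1 := by
      have := nu_le_one (n + 2) k; omega
    constructor
    · rw [he1, he2]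
      have hp : (2:ℕ) ^ (n + 2) = 2 * 2 ^ (n + 1) := by ring
      have hp1 : (1:ℕ) ≤ 2 ^ (n + 1) := Nat.one_le_two_pow
      rcases hnu with h | h <;> rw [h] <;> simp <;> omega
    · rw [he1]
      have : 2 ∣ 2 ^ (n + 1) := dvd_pow_self 2 (Nat.succ_ne_zero n)
      exact Nat.dvd_add heven (Dvd.dvd.mul_right this _)

/-- For every `n ≥ 1` and `0 ≤ k ≤ 2^{n-1} − 1`,
`σ̂ₙ(2k) + σ̂ₙ(2k+1) = 2ⁿ − 1` and `σ̂ₙ(2k)` is even. -/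
theorem sigmaHat_pairing (n k : ℕ) (hn : 1 ≤ n) (hk : k ≤ 2 ^ (n - 1) - 1) :
    sigmaHat n (2 * k) + sigmaHat n (2 * k + 1) = 2 ^ n - 1 ∧ 2 ∣ sigmaHat n (2 * k) := by
  obtain ⟨m, rfl⟩ := Nat.exists_eq_add_of_le hn
  rw [Nat.add_comm 1 m]
  exact aux m k (by simpa using hk)
end

section
/- For every n ≥ 2 and every k with 0 ≤ k ≤ 2^{n-1}−1, writing k = (k_1,…,k_{n-1})_2 for its binary expansion, one has ν_k^{(n)} = Σ_{j=1}^{n-1} k_j g_j^{(n)} mod 2. -/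
def foldT (as : List ℕ) : List ℕ := as.foldr (fun a acc => Tmap a acc) [0]

lemma Tmap_length (a : ℕ) (s : List ℕ) : (Tmap a s).length = 2 * s.length := by
  unfold Tmap; split <;> simp <;> omega

lemma foldT_length (as : List ℕ) : (foldT as).length = 2 ^ as.length := by
  induction as with
  | nil => rfl
  | cons a as ih =>
    show (Tmap a (foldT as)).length = 2 ^ (as.length + 1)
    rw [Tmap_length, ih, pow_succ]; ring

lemma digit_mod (k L i : ℕ) (h : i < L) : (k % 2^L) / 2^i % 2 = k / 2^i % 2 := by
  have h1 : (2:ℕ)^L = 2^i * (2 * 2^(L-i-1)) := by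
    rw [show 2 * 2^(L-i-1) = 2^(L-i) by rw [← pow_succ']; congr 1; omega, ← pow_add]
    congr 1; omega
  conv_rhs => rw [← Nat.div_add_mod k (2^L)]
  rw [h1, mul_assoc, Nat.mul_add_div (by positivity), mul_assoc, Nat.mul_add_mod]

lemma foldT_getD (as : List ℕ) (ha : ∀ a ∈ as, a ≤ 1) (k : ℕ) (hk : k < 2 ^ as.length) :
    (foldT as).getD k 0 =
      (∑ j ∈ Finset.range as.length, (k / 2 ^ (as.length - 1 - j) % 2) * as.getD j 0) % 2 := by
  induction as generalizing k with
  | nil =>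
    simp only [List.length_nil, pow_zero, Nat.lt_one_iff] at hk
    subst hk
    simp [foldT]
  | cons a as ih =>
    have ha' : ∀ a ∈ as, a ≤ 1 := fun x hx => ha x (List.mem_cons_of_mem _ hx)
    have haa : a ≤ 1 := ha a List.mem_cons_self
    have hlen := foldT_length as
    set L := as.length with hL
    have hk' : k < 2 * 2^L := by
      rw [show (a :: as).length = L + 1 from rfl, pow_succ] at hk; omega
    have hfold : foldT (a :: as) = Tmap a (foldT as) := rfl
    have hsum : ∑ j ∈ Finset.range (a :: as).length,
        (k / 2 ^ ((a :: as).length - 1 - j) % 2) * (a :: as).getD j 0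
        = (k / 2^L % 2) * a +
          ∑ j ∈ Finset.range L, (k / 2 ^ (L - 1 - j) % 2) * as.getD j 0 := by
      rw [show (a :: as).length = L + 1 from rfl, Finset.sum_range_succ']
      simp only [List.getD_cons_succ, List.getD_cons_zero]
      have e2 : ∀ j ∈ Finset.range L,
          k / 2 ^ (L + 1 - 1 - (j + 1)) % 2 * as.getD j 0
          = k / 2 ^ (L - 1 - j) % 2 * as.getD j 0 := by
        intro j hj; rw [show L + 1 - 1 - (j + 1) = L - 1 - j from by omega]
      rw [Finset.sum_congr rfl e2, add_comm]
      norm_num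
    rw [hfold, hsum]
    by_cases hsmall : k < 2^L
    · have hdig : k / 2^L % 2 = 0 := by rw [Nat.div_eq_of_lt hsmall]
      have hgetD : (Tmap a (foldT as)).getD k 0 = (foldT as).getD k 0 := by
        unfold Tmap
        split <;> rw [List.getD_append _ _ _ _ (by omega)]
      rw [hgetD, ih ha' k hsmall, hdig]
      simp
    · push_neg at hsmall
      have hdig : k / 2^L % 2 = 1 := by
        have h1 : k / 2^L = 1 := Nat.div_eq_of_lt_le (by omega) (by omega)
        rw [h1]
      have hrem : k - 2^L = k % 2^L := by
        rw [Nat.mod_eq_sub_mod hsmall, Nat.mod_eq_of_lt (by omega)]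
      have hlt : k - 2^L < (foldT as).length := by omega
      have hmlt : k % 2^L < 2^L := Nat.mod_lt _ (by positivity)
      have heq : (∑ j ∈ Finset.range L, ((k % 2^L) / 2 ^ (L - 1 - j) % 2) * as.getD j 0)
          = (∑ j ∈ Finset.range L, (k / 2 ^ (L - 1 - j) % 2) * as.getD j 0) := by
        apply Finset.sum_congr rfl
        intro j hj
        simp only [Finset.mem_range] at hj
        rw [digit_mod _ _ _ (by omega)]
      interval_cases a
      · have hgetD : (Tmap 0 (foldT as)).getD k 0 = (foldT as).getD (k - 2^L) 0 := by
          unfold Tmap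
          rw [if_pos rfl, List.getD_append_right _ _ _ _ (by omega)]
          congr 1; omega
        rw [hgetD, hrem, ih ha' _ hmlt, hdig, heq]
        simp
      · have hgetD : (Tmap 1 (foldT as)).getD k 0 =
            1 - (foldT as).getD (k - 2^L) 0 := by
          unfold Tmap
          rw [if_neg one_ne_zero, List.getD_append_right _ _ _ _ (by omega)]
          have hlt' : k - (foldT as).length < ((foldT as).map (fun x => 1 - x)).length := by
            simp; omega
          rw [List.getD_eq_getElem _ _ hlt', List.getElem_map,
            List.getD_eq_getElem _ _ (by omega)]
          congr 2; omega
        rw [hgetD, hrem, ih ha' _ hmlt, hdig, heq]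
        set S := ∑ j ∈ Finset.range L, (k / 2 ^ (L - 1 - j) % 2) * as.getD j 0
        omega

lemma g_le_one (n m : ℕ) : g n m ≤ 1 := by
  cases n with
  | zero => simp [g]
  | succ n =>
    rw [g]
    split
    · omega
    split <;> omega

/-- For every `n ≥ 2` and `k < 2^{n-1}`, writing
`k = (k_1, …, k_{n-1})₂` for the binary expansion `k_j = ⌊k / 2^{n-1-j}⌋ mod 2`, one has
`ν_k⁽ⁿ⁾ = Σ_{j=1}^{n-1} k_j g_j⁽ⁿ⁾ mod 2`. -/
theorem nu_eq_sum_digits_mul_g (n k : ℕ) (hn : 2 ≤ n) (hk : k < 2 ^ (n - 1)) :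
    nu n k = (∑ j ∈ Finset.Icc 1 (n - 1), (k / 2 ^ (n - 1 - j) % 2) * g n j) % 2 := by
  set as : List ℕ := (List.range (n - 1)).map (fun i => g n (i + 1)) with has
  have h1 : nuList n = foldT as := by
    unfold nuList foldT
    rw [has, List.foldr_map]
  have hlen : as.length = n - 1 := by simp [has]
  have hmem : ∀ a ∈ as, a ≤ 1 := by
    intro a hamem
    simp only [has, List.mem_map] at hamem
    obtain ⟨i, _, rfl⟩ := hamem
    exact g_le_one _ _
  unfold nu
  rw [h1, foldT_getD as hmem k (by rw [hlen]; exact hk), hlen]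
  congr 1
  conv_rhs => rw [← Finset.Ico_add_one_right_eq_Icc, Finset.sum_Ico_eq_sum_range]
  rw [show n - 1 + 1 - 1 = n - 1 from by omega]
  apply Finset.sum_congr rfl
  intro j hj
  simp only [Finset.mem_range] at hj
  have hgetD : as.getD j 0 = g n (j + 1) := by
    have hjl : j < as.length := by omega
    rw [List.getD_eq_getElem _ _ hjl]
    simp [has]
  rw [hgetD, show n - 1 - 1 - j = n - 1 - (1 + j) from by omega, add_comm 1 j]
end
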